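/- Let n ∈ ℕ, let X be a normal space with covering dimension ≤ n, let Y be a metric topological manifold of dimension n+1 admitting an atlas of bi-Lipschitz charts, and let Z ⊂ Y be a discrete subset. Then for any continuous f : X → Y and continuous ε : X → ℝ_{>0}, there exists a continuous g : X → Y such that d(g(x), f(x)) < ε(x) and g(x) ∉ Z for all x ∈ X; moreover, for any neighborhood W of Z, one can choose g to agree with f outside f^{-1}(W). -/

import Mathlib

/-- `X` has Lebesgue covering dimension at most `n`: every open cover admits an
open refinement in which every point lies in at most `n + 1` members. -/
def CovDimLE (X : Type*) [TopologicalSpace X] (n : ℕ) : Prop :=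
  ∀ (ι : Type) (U : ι → Set X), (∀ i, IsOpen (U i)) → (⋃ i, U i) = Set.univ →
    ∃ (κ : Type) (V : κ → Set X), (∀ j, IsOpen (V j)) ∧ (⋃ j, V j) = Set.univ ∧
      (∀ j, ∃ i, V j ⊆ U i) ∧
      ∀ x : X, {j | x ∈ V j}.Finite ∧ {j | x ∈ V j}.ncard ≤ n + 1

/-- `Y` is a metric topological manifold of dimension `n+1` admitting an atlas of
bi-Lipschitz charts: every point has an open neighbourhood mapped by a
bi-Lipschitz map onto an open subset of `ℝ^{n+1}`. -/
def HasBiLipschitzAtlas (n : ℕ) (Y : Type*) [MetricSpace Y] : Prop :=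
  ∀ y : Y, ∃ (V : Set Y) (φ : Y → EuclideanSpace ℝ (Fin (n + 1))),
    y ∈ V ∧ IsOpen V ∧ IsOpen (φ '' V) ∧ Set.InjOn φ V ∧
    ∃ K : ℝ, 0 < K ∧ ∀ a ∈ V, ∀ b ∈ V,
      dist (φ a) (φ b) ≤ K * dist a b ∧ dist a b ≤ K * dist (φ a) (φ b)


open Set Metric Module

abbrev Euc (n : ℕ) := EuclideanSpace ℝ (Fin (n+1))

lemma dense_avoid (n : ℕ) (W : Submodule ℝ (Euc n × ℝ))
    (hW : finrank ℝ W ≤ n + 1) :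
    Dense {y : Euc n | (y, (1:ℝ)) ∉ W} ∧ IsOpen {y : Euc n | (y, (1:ℝ)) ∉ W} := by
  have hcl : IsClosed (W : Set (Euc n × ℝ)) := Submodule.closed_of_finiteDimensional W
  have hmap : Continuous (fun y : Euc n => (y, (1:ℝ))) := by fun_prop
  have hopen : IsOpen {y : Euc n | (y, (1:ℝ)) ∉ W} := by
    rw [show {y : Euc n | (y, (1:ℝ)) ∉ W} = (fun y : Euc n => (y, (1:ℝ))) ⁻¹' (↑W)ᶜ from rfl]
    exact hcl.isOpen_compl.preimage hmap
  refine ⟨?_, hopen⟩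
  rw [show {y : Euc n | (y, (1:ℝ)) ∉ W} = {y : Euc n | (y, (1:ℝ)) ∈ W}ᶜ from rfl]
  rw [← interior_eq_empty_iff_dense_compl]
  by_contra h
  obtain ⟨y₀, hy₀⟩ := Set.nonempty_iff_ne_empty.2 h
  obtain ⟨t, ht, hball⟩ := Metric.isOpen_iff.1 isOpen_interior y₀ hy₀
  have hmem : ∀ y ∈ ball y₀ t, (y, (1:ℝ)) ∈ W := fun y hy => interior_subset (s := {y : Euc n | (y, (1:ℝ)) ∈ W}) (hball hy)
  have hy₀W : (y₀, (1:ℝ)) ∈ W := hmem y₀ (mem_ball_self ht)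
  -- all small vectors (v,0) in W
  have hsmall : ∀ v : Euc n, ‖v‖ < t → (v, (0:ℝ)) ∈ W := by
    intro v hv
    have h1 : (y₀ + v, (1:ℝ)) ∈ W := hmem _ (by
      simp [mem_ball, dist_eq_norm]; simpa [add_sub_cancel_left] using hv)
    have := W.sub_mem h1 hy₀W
    simpa using this
  have hall : ∀ v : Euc n, (v, (0:ℝ)) ∈ W := by
    intro v
    rcases eq_or_ne v 0 with rfl | hv
    · exact W.zero_mem
    · have hn : ‖v‖ ≠ 0 := by simpa using hv
      have : ((t / (2 * ‖v‖)) • v, (0:ℝ)) ∈ W := by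
        apply hsmall
        rw [norm_smul]
        simp only [Real.norm_eq_abs]
        rw [abs_of_pos (by positivity)]
        rw [div_mul_eq_mul_div, mul_comm]
        rw [mul_div_assoc]
        calc ‖v‖ * (t / (2 * ‖v‖)) = t * (‖v‖ / (2 * ‖v‖)) := by ring
        _ = t * (1/2) := by rw [div_mul_eq_div_div_swap, div_self hn]
        _ < t := by linarith
      have := W.smul_mem ((2 * ‖v‖) / t) this
      rw [Prod.smul_mk, smul_smul, smul_zero] at this
      rw [div_mul_div_comm, mul_comm (2*‖v‖) t, div_self (by positivity)] at this
      simpa using this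
  have hone : ((0 : Euc n), (1:ℝ)) ∈ W := by
    have := W.sub_mem hy₀W (hall y₀)
    simpa using this
  have htop : W = ⊤ := by
    rw [Submodule.eq_top_iff']
    intro ⟨v, r⟩
    have : ((v, (0:ℝ)) + r • ((0:Euc n), (1:ℝ))) ∈ W := W.add_mem (hall v) (W.smul_mem r hone)
    simpa using this
  have : finrank ℝ W = n + 2 := by
    rw [htop, finrank_top, Module.finrank_prod, finrank_euclideanSpace_fin, finrank_self]
  omega

lemma dense_biInter_finset {α β : Type*} [TopologicalSpace α] (F : Finset β) (S : β → Set α)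
    (h : ∀ b ∈ F, Dense (S b) ∧ IsOpen (S b)) :
    Dense (⋂ b ∈ F, S b) ∧ IsOpen (⋂ b ∈ F, S b) := by
  classical
  induction F using Finset.induction_on with
  | empty => simpa using dense_univ
  | insert _ _ hnot ih =>
    rename_i a F
    rw [Finset.set_biInter_insert]
    obtain ⟨hd, ho⟩ := ih (fun b hb => h b (Finset.mem_insert_of_mem hb))
    obtain ⟨hda, hoa⟩ := h a (Finset.mem_insert_self a F)
    exact ⟨hda.inter_of_isOpen_left hd hoa, hoa.inter ho⟩

lemma exists_generic_points (n : ℕ) (s : Finset (Euc n)) (ρ : ℝ) (hρ : 0 < ρ) :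
    ∃ p : Euc n → Euc n, (∀ q ∈ s, dist (p q) q ≤ ρ) ∧
      ∀ T : Finset (Euc n), T ⊆ s → T.card ≤ n + 1 →
        ((0 : Euc n), (1:ℝ)) ∉ Submodule.span ℝ ((fun y => (y, (1:ℝ))) '' (p '' ↑T)) := by
  classical
  induction s using Finset.induction_on with
  | empty =>
    refine ⟨id, by simp, fun T hT _ => ?_⟩
    rw [Finset.subset_empty.mp hT]
    simp only [Finset.coe_empty, Set.image_empty, Submodule.span_empty, Submodule.mem_bot]
    intro h
    exact one_ne_zero (congrArg Prod.snd h)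
  | insert _ _ hnot ih =>
    rename_i a s
    obtain ⟨p, hpd, hpg⟩ := ih
    -- sets to avoid
    set W : Finset (Euc n) → Submodule ℝ (Euc n × ℝ) := fun T' =>
      Submodule.span ℝ (insert ((0 : Euc n), (1:ℝ)) ((fun y => (y, (1:ℝ))) '' (p '' ↑T'))) with hW
    have hWrank : ∀ T' : Finset (Euc n), T'.card ≤ n → finrank ℝ (W T') ≤ n + 1 := by
      intro T' hcard
      have heq : (insert ((0 : Euc n), (1:ℝ)) ((fun y => (y, (1:ℝ))) '' (p '' ↑T'))) =
          ↑(insert ((0 : Euc n), (1:ℝ)) ((T'.image p).image (fun y => (y, (1:ℝ))))) := by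
        simp [Finset.coe_insert, Finset.coe_image]
      calc finrank ℝ (W T') ≤ (insert ((0 : Euc n), (1:ℝ))
            ((T'.image p).image (fun y => (y, (1:ℝ))))).card := by
              rw [show W T' = Submodule.span ℝ (insert ((0 : Euc n), (1:ℝ))
                ((fun y => (y, (1:ℝ))) '' (p '' ↑T'))) from rfl, heq]
              exact finrank_span_finset_le_card _
        _ ≤ ((T'.image p).image (fun y => (y, (1:ℝ)))).card + 1 := Finset.card_insert_le _ _
        _ ≤ T'.card + 1 := by
              have := Finset.card_image_le (s := T'.image p) (f := fun y => (y, (1:ℝ)))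
              have := Finset.card_image_le (s := T') (f := p)
              omega
        _ ≤ n + 1 := by omega
    -- dense open avoidance set
    obtain ⟨hD, hO⟩ := dense_biInter_finset (s.powerset.filter (fun T' => T'.card ≤ n))
      (fun T' => {y : Euc n | (y, (1:ℝ)) ∉ W T'})
      (by
        intro T' hT'
        rw [Finset.mem_filter] at hT'
        have := dense_avoid n (W T') (hWrank T' hT'.2)
        exact ⟨this.1, this.2⟩)
    obtain ⟨pa, hpa2, hpa1⟩ := hD.inter_open_nonempty (ball a ρ) isOpen_ball ⟨a, mem_ball_self hρ⟩
    refine ⟨Function.update p a pa, ?_, ?_⟩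
    · intro q hq
      rcases Finset.mem_insert.mp hq with rfl | hq
      · rw [Function.update_self]; exact le_of_lt (mem_ball.mp hpa2)
      · rw [Function.update_of_ne (fun h => hnot (by rw [← h]; exact hq))]; exact hpd q hq
    · intro T hT hcard
      by_cases haT : a ∈ T
      · -- T = insert a T', T' ⊆ s
        set T' := T.erase a with hT'
        have hT's : T' ⊆ s := fun x hx => by
          have := hT (Finset.mem_of_mem_erase hx)
          rcases Finset.mem_insert.mp this with rfl | h
          · exact absurd rfl (Finset.ne_of_mem_erase hx)
          · exact h
        have hT'card : T'.card ≤ n := by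
          have h1 : 0 < T.card := Finset.card_pos.mpr ⟨a, haT⟩
          have h2 := Finset.card_erase_of_mem haT
          rw [← hT'] at h2
          omega
        have himg : Function.update p a pa '' ↑T =
            insert pa (p '' ↑T') := by
          rw [← Finset.insert_erase haT, Finset.coe_insert, Set.image_insert_eq,
            Function.update_self]
          congr 1
          apply Set.image_congr
          intro x hx
          exact Function.update_of_ne (Finset.ne_of_mem_erase hx) _ _
        rw [himg, Set.image_insert_eq]
        intro hmem
        rw [Submodule.mem_span_insert] at hmem
        obtain ⟨c, z, hz, hzeq⟩ := hmem
        rcases eq_or_ne c 0 with rfl | hc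
        · rw [zero_smul, zero_add] at hzeq
          exact hpg T' hT's (by omega) (hzeq ▸ hz)
        · -- pa ∈ W T'
          have hpamem : ((pa, (1:ℝ))) ∈ W T' := by
            have h1 : ((0 : Euc n), (1:ℝ)) ∈ W T' := Submodule.subset_span (Set.mem_insert _ _)
            have h2 : z ∈ W T' := Submodule.span_mono (Set.subset_insert _ _) hz
            have : (pa, (1:ℝ)) = c⁻¹ • (((0 : Euc n), (1:ℝ)) - z) := by
              rw [hzeq]; rw [smul_sub, smul_add] ; rw [smul_smul, inv_mul_cancel₀ hc]
              simp
            rw [this]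
            exact Submodule.smul_mem _ _ (Submodule.sub_mem _ h1 h2)
          have : pa ∈ ⋂ T'' ∈ (s.powerset.filter (fun T'' => T''.card ≤ n)),
              {y : Euc n | (y, (1:ℝ)) ∉ W T''} := hpa1
          rw [Set.mem_iInter₂] at this
          exact this T' (by rw [Finset.mem_filter, Finset.mem_powerset]; exact ⟨hT's, hT'card⟩) hpamem
      · -- T ⊆ s
        have hTs : T ⊆ s := fun x hx => by
          rcases Finset.mem_insert.mp (hT hx) with rfl | h
          · exact absurd hx haT
          · exact h
        have himg : Function.update p a pa '' ↑T = p '' ↑T := by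
          apply Set.image_congr
          intro x hx
          exact Function.update_of_ne (fun h => haT (by rw [← h]; exact hx)) _ _
        rw [himg]
        exact hpg T hTs hcard





lemma finite_avoid {n : ℕ} {X : Type*} [TopologicalSpace X] [NormalSpace X]
    (hdim : CovDimLE X n) (H : X → Euc n) (hH : Continuous H)
    (R : ℝ) (hR : ∀ x, ‖H x‖ ≤ R) (η : ℝ) (hη : 0 < η) :
    ∃ G : X → Euc n, Continuous G ∧ ∀ x, ‖G x - H x‖ ≤ η ∧ G x ≠ 0 := by
  classical
  -- finite net
  obtain ⟨s, hs⟩ : ∃ s : Finset (Euc n), closedBall (0 : Euc n) R ⊆ ⋃ q ∈ s, ball q (η/4) := by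
    have hc : IsCompact (closedBall (0 : Euc n) R) := isCompact_closedBall _ _
    exact hc.elim_finite_subcover (fun q : Euc n => ball q (η/4)) (fun q => isOpen_ball)
      (fun y _ => mem_iUnion.2 ⟨y, mem_ball_self (by positivity)⟩)
  set ι := {q : Euc n // q ∈ s}
  set U : ι → Set X := fun i => H ⁻¹' (ball (i : Euc n) (η/4)) with hU
  have hUo : ∀ i, IsOpen (U i) := fun i => (isOpen_ball).preimage hH
  have hUc : (⋃ i, U i) = Set.univ := by
    apply Set.eq_univ_of_forall
    intro x
    have : H x ∈ closedBall (0 : Euc n) R := by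
      rw [mem_closedBall, dist_zero_right]; exact hR x
    obtain ⟨q, hq, hxq⟩ := mem_iUnion₂.1 (hs this)
    exact mem_iUnion.2 ⟨⟨q, hq⟩, hxq⟩
  obtain ⟨κ, V, hVo, hVc, hVr, hVm⟩ := hdim ι U hUo hUc
  choose sel hsel using hVr
  -- coalesced refinement
  set V' : ι → Set X := fun i => ⋃ j : {j : κ // sel j = i}, V (j : κ) with hV'
  have hV'o : ∀ i, IsOpen (V' i) := fun i => isOpen_iUnion fun j => hVo j
  have hV'U : ∀ i, V' i ⊆ U i := by
    intro i x hx
    obtain ⟨j, hj⟩ := mem_iUnion.1 hx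
    exact j.2 ▸ hsel (j : κ) hj
  have hV'c : (⋃ i, V' i) = Set.univ := by
    apply Set.eq_univ_of_forall
    intro x
    have : x ∈ ⋃ j, V j := hVc ▸ mem_univ x
    obtain ⟨j, hj⟩ := mem_iUnion.1 this
    exact mem_iUnion.2 ⟨sel j, mem_iUnion.2 ⟨⟨j, rfl⟩, hj⟩⟩
  have hV'm : ∀ x : X, {i : ι | x ∈ V' i}.ncard ≤ n + 1 := by
    intro x
    rcases eq_or_ne {i : ι | x ∈ V' i} ∅ with he | hne
    · simp [he]
    obtain ⟨i₀, hi₀⟩ := Set.nonempty_iff_ne_empty.2 hne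
    obtain ⟨j₀, hj₀⟩ := mem_iUnion.1 hi₀
    have hwit : ∀ i : ι, x ∈ V' i → ∃ j : κ, sel j = i ∧ x ∈ V j := by
      intro i hi
      obtain ⟨j, hj⟩ := mem_iUnion.1 hi
      exact ⟨j, j.2, hj⟩
    set F : ι → κ := fun i => if h : ∃ j : κ, sel j = i ∧ x ∈ V j then h.choose else (j₀ : κ)
    have hmaps : ∀ i ∈ {i : ι | x ∈ V' i}, F i ∈ {j | x ∈ V j} := by
      intro i hi
      have h := hwit i hi
      simp only [F, dif_pos h]
      exact h.choose_spec.2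
    have hinj : Set.InjOn F {i : ι | x ∈ V' i} := by
      intro i hi i' hi' heq
      have h := hwit i hi
      have h' := hwit i' hi'
      have e1 : sel (F i) = i := by simp only [F, dif_pos h]; exact h.choose_spec.1
      have e2 : sel (F i') = i' := by simp only [F, dif_pos h']; exact h'.choose_spec.1
      rw [← e1, ← e2, heq]
    calc {i : ι | x ∈ V' i}.ncard ≤ {j | x ∈ V j}.ncard :=
          Set.ncard_le_ncard_of_injOn F hmaps hinj (hVm x).1
      _ ≤ n + 1 := (hVm x).2
  -- shrinking
  obtain ⟨v, hvc, hvo, hvcl⟩ := exists_subset_iUnion_closure_subset isClosed_univ hV'o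
    (fun x _ => Set.toFinite _) (by rw [hV'c])
  -- Urysohn functions
  have hub : ∀ i : ι, ∃ h : C(X, ℝ), Set.EqOn h 0 (V' i)ᶜ ∧ Set.EqOn h 1 (closure (v i)) ∧
      ∀ x, h x ∈ Icc (0:ℝ) 1 :=
    fun i => exists_continuous_zero_one_of_isClosed (hV'o i).isClosed_compl isClosed_closure
      (Set.disjoint_of_subset_right (hvcl i) (disjoint_compl_left))
  choose h hh0 hh1 hh01 using hub
  set S : X → ℝ := fun x => ∑ i : ι, h i x with hS
  have hScont : Continuous S := continuous_finset_sum _ fun i _ => (h i).continuous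
  have hS1 : ∀ x, 1 ≤ S x := by
    intro x
    obtain ⟨i₀, hi₀⟩ := mem_iUnion.1 (hvc (mem_univ x))
    have : h i₀ x = 1 := hh1 i₀ (subset_closure hi₀)
    calc (1:ℝ) = h i₀ x := this.symm
      _ ≤ S x := Finset.single_le_sum (fun i _ => (hh01 i x).1) (Finset.mem_univ i₀)
  have hSpos : ∀ x, 0 < S x := fun x => lt_of_lt_of_le one_pos (hS1 x)
  -- generic points
  obtain ⟨p, hpd, hpg⟩ := exists_generic_points n s (η/4) (by positivity)
  set G : X → Euc n := fun x => ∑ i : ι, (h i x / S x) • p (i : Euc n) with hG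
  have hGcont : Continuous G := by
    apply continuous_finset_sum
    intro i _
    exact (((h i).continuous).div hScont fun x => (hSpos x).ne').smul continuous_const
  have hsupp : ∀ i x, h i x ≠ 0 → x ∈ V' i := by
    intro i x hx
    by_contra hmem
    exact hx (hh0 i hmem)
  have hwsum : ∀ x, ∑ i : ι, h i x / S x = 1 := by
    intro x
    rw [← Finset.sum_div]
    exact div_self (hSpos x).ne'
  refine ⟨G, hGcont, fun x => ⟨?_, ?_⟩⟩
  · -- approximation bound
    have key : G x - H x = ∑ i : ι, (h i x / S x) • (p (i : Euc n) - H x) := by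
      simp only [smul_sub]
      rw [Finset.sum_sub_distrib, ← Finset.sum_smul, hwsum x, one_smul]
    rw [key]
    have hw0 : ∀ i : ι, 0 ≤ h i x / S x := fun i => div_nonneg (hh01 i x).1 (hSpos x).le
    calc ‖∑ i : ι, (h i x / S x) • (p (i : Euc n) - H x)‖
        ≤ ∑ i : ι, ‖(h i x / S x) • (p (i : Euc n) - H x)‖ := norm_sum_le _ _
      _ ≤ ∑ i : ι, (h i x / S x) * (η/2) := by
          apply Finset.sum_le_sum
          intro i _
          rw [norm_smul, Real.norm_eq_abs, abs_of_nonneg (hw0 i)]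
          rcases eq_or_ne (h i x) 0 with h0 | h0
          · simp [h0]
          · have hxU : x ∈ U i := hV'U i (hsupp i x h0)
            have hd : dist (H x) (i : Euc n) < η/4 := hxU
            have hnorm : ‖p (i : Euc n) - H x‖ ≤ η/2 := by
              calc ‖p (i : Euc n) - H x‖ = dist (p (i : Euc n)) (H x) := (dist_eq_norm _ _).symm
                _ ≤ dist (p (i : Euc n)) (i : Euc n) + dist (i : Euc n) (H x) :=
                    dist_triangle _ _ _
                _ ≤ η/4 + η/4 := add_le_add (hpd (i : Euc n) i.2)
                    (le_of_lt (by rw [dist_comm] at hd; exact hd))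
                _ = η/2 := by ring
            exact mul_le_mul_of_nonneg_left hnorm (hw0 i)
      _ = η/2 := by rw [← Finset.sum_mul, hwsum x, one_mul]
      _ ≤ η := by linarith
  · -- nonvanishing
    intro hG0
    set Tf : Finset ι := Finset.univ.filter (fun i : ι => h i x ≠ 0) with hTf
    set T : Finset (Euc n) := Tf.image Subtype.val with hT
    have hTs : T ⊆ s := by
      intro q hq
      obtain ⟨i, _, rfl⟩ := Finset.mem_image.1 hq
      exact i.2
    have hTcard : T.card ≤ n + 1 := by
      have h1 : T.card ≤ Tf.card := Finset.card_image_le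
      have h2 : (↑Tf : Set ι) ⊆ {i : ι | x ∈ V' i} := by
        intro i hi
        rw [Finset.mem_coe, hTf, Finset.mem_filter] at hi
        exact hsupp i x hi.2
      have h3 : (↑Tf : Set ι).ncard ≤ {i : ι | x ∈ V' i}.ncard :=
        Set.ncard_le_ncard h2 (Set.toFinite _)
      rw [Set.ncard_coe_finset] at h3
      have := hV'm x
      omega
    apply hpg T hTs hTcard
    have hzero : ∀ i : ι, i ∉ Tf → (h i x / S x) • ((p (i : Euc n), (1:ℝ)) :
        Euc n × ℝ) = 0 := by
      intro i hi
      rw [hTf, Finset.mem_filter, not_and] at hi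
      have : h i x = 0 := by
        by_contra hc
        exact (hi (Finset.mem_univ i)) hc
      rw [this, zero_div, zero_smul]
    have hkey : ((0 : Euc n), (1:ℝ)) = ∑ i ∈ Tf, (h i x / S x) • ((p (i : Euc n), (1:ℝ)) :
        Euc n × ℝ) := by
      rw [Finset.sum_subset (Finset.subset_univ Tf) (fun i _ hi => hzero i hi)]
      apply Prod.ext
      · simp only [Prod.fst_sum, Prod.smul_mk]
        exact hG0.symm
      · simp only [Prod.snd_sum, Prod.smul_mk, smul_eq_mul, mul_one]
        exact (hwsum x).symm
    rw [hkey]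
    apply Submodule.sum_smul_mem
    intro i hi
    apply Submodule.subset_span
    refine ⟨p (i : Euc n), ?_, rfl⟩
    exact Set.mem_image_of_mem p (Finset.mem_coe.2 (Finset.mem_image_of_mem Subtype.val hi))





lemma const_avoid {n : ℕ} {X : Type*} [TopologicalSpace X] [NormalSpace X]
    (hdim : CovDimLE X n) (H : X → Euc n) (hH : Continuous H)
    (R : ℝ) (hR : ∀ x, ‖H x‖ ≤ R) (η : ℝ) (hη : 0 < η) :
    ∃ G : X → Euc n, Continuous G ∧ ∀ x, ‖G x - H x‖ ≤ η ∧ η/4 ≤ ‖G x‖ := by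
  obtain ⟨G₀, hG₀c, hG₀⟩ := finite_avoid hdim H hH R hR (η/2) (by positivity)
  set c := η/4 with hc
  have hpos : ∀ x, 0 < ‖G₀ x‖ := fun x => norm_pos_iff.2 (hG₀ x).2
  refine ⟨fun x => max 1 (c / ‖G₀ x‖) • G₀ x, ?_, fun x => ⟨?_, ?_⟩⟩
  · exact ((continuous_const.max ((continuous_const.div (hG₀c.norm)
      (fun x => (hpos x).ne')))).smul hG₀c)
  · -- ‖G x - H x‖ ≤ η
    have h1 : ‖max 1 (c / ‖G₀ x‖) • G₀ x - G₀ x‖ ≤ c := by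
      have : max 1 (c / ‖G₀ x‖) • G₀ x - G₀ x = (max 1 (c / ‖G₀ x‖) - 1) • G₀ x := by
        rw [sub_smul, one_smul]
      rw [this, norm_smul, Real.norm_eq_abs]
      rcases le_or_gt (c / ‖G₀ x‖) 1 with hle | hlt
      · rw [max_eq_left hle]; simp only [sub_self, abs_zero, zero_mul]; rw [hc]; positivity
      · rw [max_eq_right hlt.le, abs_of_nonneg (by linarith)]
        rw [sub_mul, div_mul_cancel₀ _ (hpos x).ne', one_mul]
        have : 0 < ‖G₀ x‖ := hpos x
        linarith
    calc ‖max 1 (c / ‖G₀ x‖) • G₀ x - H x‖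
        ≤ ‖max 1 (c / ‖G₀ x‖) • G₀ x - G₀ x‖ + ‖G₀ x - H x‖ := by
          have := norm_add_le (max 1 (c / ‖G₀ x‖) • G₀ x - G₀ x) (G₀ x - H x)
          simpa [sub_add_sub_cancel] using this
      _ ≤ c + η/2 := add_le_add h1 (hG₀ x).1
      _ ≤ η := by rw [hc]; linarith
  · -- margin
    rw [norm_smul, Real.norm_eq_abs, abs_of_nonneg (le_trans zero_le_one (le_max_left _ _))]
    rcases le_or_gt (c / ‖G₀ x‖) 1 with hle | hlt
    · rw [max_eq_left hle, one_mul]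
      calc c = (c / ‖G₀ x‖) * ‖G₀ x‖ := by rw [div_mul_cancel₀ _ (hpos x).ne']
        _ ≤ 1 * ‖G₀ x‖ := by
            apply mul_le_mul_of_nonneg_right hle (hpos x).le
        _ = ‖G₀ x‖ := one_mul _
    · rw [max_eq_right hlt.le, div_mul_cancel₀ _ (hpos x).ne']

/-- cutoff -/
noncomputable def cut (t : ℝ) : ℝ := max 0 (min 1 t)

lemma cut_continuous : Continuous cut := continuous_const.max (continuous_const.min continuous_id)

lemma cut_mem01 (t : ℝ) : cut t ∈ Icc (0:ℝ) 1 :=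
  ⟨le_max_left _ _, max_le zero_le_one (min_le_left _ _)⟩

lemma cut_of_nonpos {t : ℝ} (h : t ≤ 0) : cut t = 0 := by
  rw [cut, max_eq_left]; exact le_trans (min_le_right _ _) h

lemma cut_of_one_le {t : ℝ} (h : 1 ≤ t) : cut t = 1 := by
  rw [cut, min_eq_left h, max_eq_right zero_le_one]

/-- One stage of the scale-by-scale construction. -/
lemma stage_avoid {n : ℕ} {X : Type*} [TopologicalSpace X] [NormalSpace X]
    (hdim : CovDimLE X n) (H : X → Euc n) (u : X → ℝ) (η : ℝ) :
    ∃ H' : X → Euc n,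
      0 < η → Continuous H → (∃ R, ∀ x, ‖H x‖ ≤ R) → Continuous u →
        Continuous H' ∧ (∃ R, ∀ x, ‖H' x‖ ≤ R) ∧ (∀ x, ‖H' x - H x‖ ≤ η) ∧
         (∀ x, η/2 ≤ ‖H x‖ → H' x = H x) ∧ (∀ x, u x ≤ 1 → H' x = H x) ∧
         (∀ x, 2 ≤ u x → η/32 ≤ ‖H' x‖) := by
  classical
  by_cases hyp : 0 < η ∧ Continuous H ∧ (∃ R, ∀ x, ‖H x‖ ≤ R) ∧ Continuous u
  swap
  · exact ⟨H, fun h1 h2 h3 h4 => absurd ⟨h1, h2, h3, h4⟩ hyp⟩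
  obtain ⟨hη, hHc, ⟨R, hR⟩, huc⟩ := hyp
  obtain ⟨G, hGc, hG⟩ := const_avoid hdim H hHc R hR (η/8) (by positivity)
  set χ : X → ℝ := fun x => cut (2 - 4 * ‖H x‖ / η) * cut (u x - 1) with hχ
  have hχc : Continuous χ := by
    apply Continuous.mul
    · exact cut_continuous.comp (by fun_prop)
    · exact cut_continuous.comp (by fun_prop)
  have hχ01 : ∀ x, χ x ∈ Icc (0:ℝ) 1 := by
    intro x
    constructor
    · exact mul_nonneg (cut_mem01 _).1 (cut_mem01 _).1
    · calc χ x ≤ 1 * 1 := mul_le_mul (cut_mem01 _).2 (cut_mem01 _).2 (cut_mem01 _).1 zero_le_one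
        _ = 1 := one_mul 1
  refine ⟨fun x => H x + χ x • (G x - H x), fun _ _ _ _ => ?_⟩
  have hdiff : ∀ x, ‖χ x • (G x - H x)‖ ≤ η / 8 := by
    intro x
    rw [norm_smul, Real.norm_eq_abs, abs_of_nonneg (hχ01 x).1]
    calc χ x * ‖G x - H x‖ ≤ 1 * (η/8) :=
          mul_le_mul (hχ01 x).2 (hG x).1 (norm_nonneg _) zero_le_one
      _ = η/8 := one_mul _
  refine ⟨hHc.add (hχc.smul (hGc.sub hHc)), ⟨R + η, fun x => ?_⟩, fun x => ?_, fun x hx => ?_,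
    fun x hx => ?_, fun x hx => ?_⟩
  · calc ‖H x + χ x • (G x - H x)‖ ≤ ‖H x‖ + ‖χ x • (G x - H x)‖ := norm_add_le _ _
      _ ≤ R + η := add_le_add (hR x) (le_trans (hdiff x) (by linarith))
  · calc ‖H x + χ x • (G x - H x) - H x‖ = ‖χ x • (G x - H x)‖ := by rw [add_sub_cancel_left]
      _ ≤ η := le_trans (hdiff x) (by linarith)
  · -- big norm: unchanged
    have : cut (2 - 4 * ‖H x‖ / η) = 0 := by
      apply cut_of_nonpos
      rw [sub_nonpos]
      rw [le_div_iff₀ hη]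
      linarith
    simp only [hχ]
    rw [this, zero_mul, zero_smul, add_zero]
  · -- u ≤ 1 : unchanged
    have : cut (u x - 1) = 0 := cut_of_nonpos (by linarith)
    simp only [hχ]
    rw [this, mul_zero, zero_smul, add_zero]
  · -- 2 ≤ u : margin
    have h2 : cut (u x - 1) = 1 := cut_of_one_le (by linarith)
    rcases le_or_gt ‖H x‖ (η/4) with hsm | hbig
    · have h1 : cut (2 - 4 * ‖H x‖ / η) = 1 := by
        apply cut_of_one_le
        have h4 : 4 * ‖H x‖ / η ≤ 1 := by rw [div_le_one hη]; linarith
        linarith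
      simp only [hχ]
      rw [h1, h2, mul_one, one_smul, add_sub_cancel]
      calc η/32 ≤ η/8/4 := by linarith
        _ ≤ ‖G x‖ := (hG x).2
    · have : ‖H x + χ x • (G x - H x)‖ ≥ ‖H x‖ - ‖χ x • (G x - H x)‖ := by
        have h3 := norm_sub_le (H x + χ x • (G x - H x)) (χ x • (G x - H x))
        rw [add_sub_cancel_right] at h3
        linarith
      have := hdiff x
      linarith

/-- Variable accuracy avoidance. -/
lemma var_avoid {n : ℕ} {X : Type*} [TopologicalSpace X] [NormalSpace X]
    (hdim : CovDimLE X n) (F : X → Euc n) (hF : Continuous F)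
    (R : ℝ) (hR : ∀ x, ‖F x‖ ≤ R) (δ : X → ℝ) (hδc : Continuous δ) (hδ : ∀ x, 0 < δ x) :
    ∃ G : X → Euc n, Continuous G ∧ ∀ x, ‖G x - F x‖ ≤ δ x ∧ G x ≠ 0 := by
  classical
  set η : ℕ → ℝ := fun m => (1/8 : ℝ) * (1/16)^m with hη
  set d : ℕ → ℝ := fun m => (1/2 : ℝ)^(m+1) with hd
  have hηpos : ∀ m, 0 < η m := fun m => by simp only [hη]; positivity
  have hdpos : ∀ m, 0 < d m := fun m => by simp only [hd]; positivity
  have hηsucc : ∀ m, η (m+1) = η m / 16 := by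
    intro m; simp only [hη]; rw [pow_succ]; ring
  have hdsucc : ∀ m, d (m+1) = d m / 2 := by
    intro m; simp only [hd]; rw [pow_succ]; ring
  have hpow1 : ∀ k : ℕ, ((1:ℝ)/2)^k * 2^k = 1 := by
    intro k; rw [← mul_pow]; norm_num
  set u : ℕ → X → ℝ := fun m x => δ x * 2^(m+2) with hu
  have hucont : ∀ m, Continuous (u m) := fun m => hδc.mul continuous_const
  have hu2 : ∀ m x, d m ≤ δ x → 2 ≤ u m x := by
    intro m x hx
    have key : d m * 2^(m+2) = 2 := by
      simp only [hd]
      rw [pow_succ (2:ℝ) (m+1), ← mul_assoc, hpow1 (m+1), one_mul]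
    calc (2:ℝ) = d m * 2^(m+2) := key.symm
      _ ≤ δ x * 2^(m+2) := mul_le_mul_of_nonneg_right hx (by positivity)
  have hu1 : ∀ m x, δ x ≤ d (m+1) → u m x ≤ 1 := by
    intro m x hx
    have key : d (m+1) * 2^(m+2) = 1 := by
      simp only [hd]
      exact hpow1 (m+2)
    calc u m x = δ x * 2^(m+2) := rfl
      _ ≤ d (m+1) * 2^(m+2) := mul_le_mul_of_nonneg_right hx (by positivity)
      _ = 1 := key
  -- the sequence of maps
  set seqF : ℕ → X → Euc n := fun m => Nat.rec F
    (fun m Hm => (stage_avoid hdim Hm (u m) (η m)).choose) m with hseq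
  have hseq0 : seqF 0 = F := rfl
  have hseqS : ∀ m, seqF (m+1) = (stage_avoid hdim (seqF m) (u m) (η m)).choose :=
    fun m => rfl
  have hbase : ∀ m, Continuous (seqF m) ∧ ∃ R', ∀ x, ‖seqF m x‖ ≤ R' := by
    intro m
    induction m with
    | zero => exact ⟨hF, R, hR⟩
    | succ m ih =>
      have := (stage_avoid hdim (seqF m) (u m) (η m)).choose_spec (hηpos m) ih.1 ih.2 (hucont m)
      rw [← hseqS m] at this
      exact ⟨this.1, this.2.1⟩
  have hstep : ∀ m, (∀ x, ‖seqF (m+1) x - seqF m x‖ ≤ η m) ∧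
      (∀ x, η m / 2 ≤ ‖seqF m x‖ → seqF (m+1) x = seqF m x) ∧
      (∀ x, u m x ≤ 1 → seqF (m+1) x = seqF m x) ∧
      (∀ x, 2 ≤ u m x → η m / 32 ≤ ‖seqF (m+1) x‖) := by
    intro m
    have := (stage_avoid hdim (seqF m) (u m) (η m)).choose_spec (hηpos m)
      (hbase m).1 (hbase m).2 (hucont m)
    rw [← hseqS m] at this
    exact ⟨this.2.2.1, this.2.2.2.1, this.2.2.2.2.1, this.2.2.2.2.2⟩
  have hηmono : ∀ a b : ℕ, a ≤ b → η b ≤ η a := by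
    intro a b hab
    simp only [hη]
    apply mul_le_mul_of_nonneg_left _ (by norm_num)
    exact pow_le_pow_of_le_one (by norm_num) (by norm_num) hab
  -- persistence
  have hpers : ∀ m k, m ≤ k → ∀ x, d m ≤ δ x →
      seqF (k+1) x = seqF (m+1) x ∧ η m / 32 ≤ ‖seqF (k+1) x‖ := by
    intro m k hmk x hx
    induction k with
    | zero =>
      have h0 : m = 0 := Nat.le_zero.1 hmk
      subst h0
      exact ⟨rfl, (hstep 0).2.2.2 x (hu2 0 x hx)⟩
    | succ k ih =>
      rcases Nat.lt_or_ge m (k+1) with hlt | hge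
      · have hmk' : m ≤ k := Nat.lt_succ_iff.1 hlt
        obtain ⟨heq, hnorm⟩ := ih hmk'
        have hηle : η (k+1) / 2 ≤ η m / 32 := by
          have h1 := hηmono (m+1) (k+1) (Nat.succ_le_succ hmk')
          rw [hηsucc m] at h1
          linarith [hηpos m]
        have hun : seqF (k+1+1) x = seqF (k+1) x :=
          (hstep (k+1)).2.1 x (le_trans hηle hnorm)
        refine ⟨hun.trans heq, ?_⟩
        rw [hun]
        exact hnorm
      · have h0 : m = k+1 := le_antisymm hmk hge
        subst h0
        exact ⟨rfl, (hstep (k+1)).2.2.2 x (hu2 (k+1) x hx)⟩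
  have hM : ∀ x, ∃ m, d m ≤ δ x := by
    intro x
    obtain ⟨m, hm⟩ := pow_unbounded_of_one_lt (1 / δ x) (one_lt_two (α := ℝ))
    refine ⟨m, ?_⟩
    simp only [hd]
    rw [div_pow, one_pow, div_le_iff₀ (by positivity)]
    rw [div_lt_iff₀ (hδ x)] at hm
    have hp : (0:ℝ) < 2^m := by positivity
    calc (1:ℝ) ≤ 2^m * δ x := le_of_lt hm
      _ ≤ 2^(m+1) * δ x := by
          apply mul_le_mul_of_nonneg_right _ (hδ x).le
          rw [pow_succ]
          nlinarith
      _ = δ x * 2^(m+1) := mul_comm _ _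
  set G : X → Euc n := fun x => seqF (Nat.find (hM x) + 1) x with hG
  have hGc : Continuous G := by
    rw [continuous_iff_continuousAt]
    intro x₀
    set m₀ := Nat.find (hM x₀) with hm₀
    have hx₀ : d (m₀ + 1) < δ x₀ := by
      have h1 : d (m₀+1) < d m₀ := by rw [hdsucc]; linarith [hdpos m₀]
      exact lt_of_lt_of_le h1 (Nat.find_spec (hM x₀))
    have hOopen : IsOpen {x | d (m₀+1) < δ x} := isOpen_lt continuous_const hδc
    have hagree : ∀ x ∈ {x | d (m₀+1) < δ x}, G x = seqF (m₀ + 1 + 1) x := by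
      intro x hx
      have hle : Nat.find (hM x) ≤ m₀ + 1 := Nat.find_le (le_of_lt hx)
      have h1 : d (Nat.find (hM x)) ≤ δ x := Nat.find_spec (hM x)
      exact ((hpers (Nat.find (hM x)) (m₀+1) hle x h1).1).symm
    have hev : G =ᶠ[nhds x₀] seqF (m₀ + 1 + 1) :=
      Filter.eventuallyEq_of_mem (hOopen.mem_nhds hx₀) hagree
    exact ((hbase (m₀+1+1)).1.continuousAt).congr hev.symm
  refine ⟨G, hGc, fun x => ⟨?_, ?_⟩⟩
  · -- closeness
    set m := Nat.find (hM x) with hm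
    have hspec : d m ≤ δ x := Nat.find_spec (hM x)
    rcases Nat.eq_zero_or_pos m with h0 | hposm
    · have hGx : G x = seqF 1 x := by rw [hG]; simp only []; rw [← hm, h0]; norm_num
      rw [hGx]
      have h1 : ‖seqF 1 x - seqF 0 x‖ ≤ η 0 := (hstep 0).1 x
      rw [hseq0] at h1
      have h2 : d 0 ≤ δ x := by rw [← h0]; exact hspec
      have h3 : η 0 ≤ d 0 := by simp only [hη, hd]; norm_num
      linarith
    · obtain ⟨N, hmN⟩ : ∃ N, m = N + 1 := ⟨m - 1, by omega⟩
      have hlt : δ x < d N := by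
        by_contra hcon
        push_neg at hcon
        have := Nat.find_min (hM x) (show N < m by omega)
        exact this hcon
      have hfix : ∀ k, k ≤ N → seqF k x = F x := by
        intro k hk
        induction k with
        | zero => rw [hseq0]
        | succ k ih =>
          have hk' : k ≤ N := by omega
          rw [← ih hk']
          apply (hstep k).2.2.1 x
          apply hu1 k x
          have hd1 : d N ≤ d (k+1) := by
            simp only [hd]
            exact pow_le_pow_of_le_one (by norm_num) (by norm_num) (by omega)
          linarith
      have hGx : G x = seqF (m+1) x := by rw [hG]
      have key : η (N+1) + η N ≤ d (N+1) := by
        simp only [hη, hd]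
        have h16 : ((1:ℝ)/16)^N ≤ ((1:ℝ)/2)^N := pow_le_pow_left₀ (by norm_num) (by norm_num) N
        have hp16 : (0:ℝ) ≤ ((1:ℝ)/16)^N := by positivity
        rw [pow_succ ((1:ℝ)/16), pow_succ ((1:ℝ)/2), pow_succ ((1:ℝ)/2)]
        nlinarith
      calc ‖G x - F x‖ = ‖(seqF (m+1) x - seqF m x) + (seqF m x - F x)‖ := by
            rw [hGx]; congr 1; abel
        _ ≤ ‖seqF (m+1) x - seqF m x‖ + ‖seqF m x - F x‖ := norm_add_le _ _
        _ ≤ η m + η N := by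
            apply add_le_add ((hstep m).1 x)
            have : seqF m x - F x = seqF (N+1) x - seqF N x := by
              rw [hmN, hfix N le_rfl]
            rw [this]
            exact (hstep N).1 x
        _ ≤ d (N+1) := by rw [hmN]; exact key
        _ = d m := by rw [hmN]
        _ ≤ δ x := hspec
  · -- nonvanishing
    have := (hpers (Nat.find (hM x)) (Nat.find (hM x)) le_rfl x (Nat.find_spec (hM x))).2
    have hpos' := hηpos (Nat.find (hM x))
    intro hcon
    rw [hG] at hcon
    simp only [] at hcon
    rw [hcon] at this
    rw [norm_zero] at this
    linarith





lemma covDimLE_subtype_of_isClosed {X : Type*} [TopologicalSpace X] {n : ℕ}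
    (hdim : CovDimLE X n) {C : Set X} (hC : IsClosed C) : CovDimLE C n := by
  classical
  intro ι U hUo hUc
  rcases isEmpty_or_nonempty ι with hι | hι
  · have huniv : (Set.univ : Set C) = ∅ := by
      rw [← hUc]; exact Set.iUnion_of_empty U
    refine ⟨Empty, fun j => ∅, fun j => isOpen_empty, ?_, fun j => j.elim, fun x => ?_⟩
    · rw [huniv]; exact Set.iUnion_of_empty _
    · refine ⟨Set.toFinite _, ?_⟩
      have h0 : {j : Empty | x ∈ (∅:Set C)} = ∅ := Set.eq_empty_of_isEmpty _
      rw [h0]; simp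
  · obtain ⟨i0⟩ := hι
    have hopen : ∀ i, ∃ O : Set X, IsOpen O ∧ Subtype.val ⁻¹' O = U i :=
      fun i => isOpen_induced_iff.1 (hUo i)
    choose O hOo hOpre using hopen
    set Oo : Option ι → Set X := fun o => Option.rec Cᶜ O o with hOodef
    have hOoo : ∀ o, IsOpen (Oo o) := by
      intro o; cases o with
      | none => exact hC.isOpen_compl
      | some i => exact hOo i
    have hOoc : (⋃ o, Oo o) = Set.univ := by
      apply Set.eq_univ_of_forall
      intro x
      by_cases hx : x ∈ C
      · have : (⟨x, hx⟩ : C) ∈ (Set.univ : Set C) := mem_univ _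
        rw [← hUc] at this
        obtain ⟨i, hi⟩ := mem_iUnion.1 this
        rw [← hOpre i] at hi
        exact mem_iUnion.2 ⟨some i, hi⟩
      · exact mem_iUnion.2 ⟨none, hx⟩
    obtain ⟨κ, V, hVo, hVc, hVr, hVm⟩ := hdim (Option ι) Oo hOoo hOoc
    choose sel hsel using hVr
    set idx : κ → ι := fun j => (sel j).getD i0 with hidx
    refine ⟨κ, fun j => Subtype.val ⁻¹' (V j), fun j => (hVo j).preimage continuous_subtype_val,
      ?_, fun j => ⟨idx j, ?_⟩, fun x => ?_⟩
    · apply Set.eq_univ_of_forall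
      intro x
      have : (x : X) ∈ ⋃ j, V j := hVc ▸ mem_univ _
      obtain ⟨j, hj⟩ := mem_iUnion.1 this
      exact mem_iUnion.2 ⟨j, hj⟩
    · rcases ho : sel j with _ | i
      · intro x hx
        have := hsel j hx
        rw [ho] at this
        exact absurd x.2 this
      · intro x hx
        have := hsel j hx
        rw [ho] at this
        rw [hidx]
        simp only [ho, Option.getD_some]
        rw [← hOpre i]
        exact this
    · exact hVm (x : X)






lemma perchart {n : ℕ} {X : Type*} [TopologicalSpace X] [NormalSpace X]
    (hdim : CovDimLE X n)
    {Y : Type*} [MetricSpace Y]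
    (f : X → Y) (hf : Continuous f) (ε : X → ℝ) (hε : Continuous ε) (hεpos : ∀ x, 0 < ε x)
    (z : Y) (V : Set Y) (φ : Y → Euc n) (hzV : z ∈ V) (hVo : IsOpen V)
    (hφo : IsOpen (φ '' V)) (hφi : Set.InjOn φ V)
    (K : ℝ) (hK : 0 < K)
    (hbl : ∀ a ∈ V, ∀ b ∈ V, dist (φ a) (φ b) ≤ K * dist a b ∧ dist a b ≤ K * dist (φ a) (φ b))
    (r : ℝ) (hr : 0 < r) (hball : closedBall z r ⊆ V) :
    ∃ g : X → Y, Continuous g ∧ (∀ x, dist (g x) (f x) ≤ min (ε x / 2) (r / 6)) ∧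
      (∀ x, f x ∈ closedBall z r → g x ∈ ball z (2*r) ∧ g x ≠ z) ∧
      (∀ x, g x ≠ f x → dist (f x) z < r / 2) := by
  classical
  set K' : ℝ := max K 1 with hK'def
  have hK1 : 1 ≤ K' := le_max_right _ _
  have hK'pos : 0 < K' := lt_of_lt_of_le one_pos hK1
  have hbl' : ∀ a ∈ V, ∀ b ∈ V,
      dist (φ a) (φ b) ≤ K' * dist a b ∧ dist a b ≤ K' * dist (φ a) (φ b) := by
    intro a ha b hb
    obtain ⟨h1, h2⟩ := hbl a ha b hb
    constructor
    · exact le_trans h1 (mul_le_mul_of_nonneg_right (le_max_left _ _) dist_nonneg)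
    · exact le_trans h2 (mul_le_mul_of_nonneg_right (le_max_left _ _) dist_nonneg)
  -- the inverse chart
  set ψ : Euc n → Y := fun e => if h : ∃ a ∈ V, φ a = e then h.choose else z with hψdef
  have hψspec : ∀ e ∈ φ '' V, ψ e ∈ V ∧ φ (ψ e) = e := by
    intro e he
    obtain ⟨a, ha, hae⟩ := he
    have hex : ∃ a ∈ V, φ a = e := ⟨a, ha, hae⟩
    simp only [hψdef, dif_pos hex]
    exact ⟨hex.choose_spec.1, hex.choose_spec.2⟩
  have hψφ : ∀ a ∈ V, ψ (φ a) = a := by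
    intro a ha
    obtain ⟨h1, h2⟩ := hψspec (φ a) (mem_image_of_mem φ ha)
    exact hφi h1 ha h2
  have hψlip : LipschitzOnWith (Real.toNNReal K') ψ (φ '' V) := by
    apply LipschitzOnWith.of_dist_le_mul
    intro e he e' he'
    obtain ⟨h1, h2⟩ := hψspec e he
    obtain ⟨h1', h2'⟩ := hψspec e' he'
    have := (hbl' (ψ e) h1 (ψ e') h1').2
    rw [h2, h2'] at this
    rwa [Real.coe_toNNReal _ hK'pos.le]
  have hψcont : ContinuousOn ψ (φ '' V) := hψlip.continuousOn
  have hφlip : LipschitzOnWith (Real.toNNReal K') φ V :=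
    LipschitzOnWith.of_dist_le_mul (by
      intro a ha b hb
      rw [Real.coe_toNNReal _ hK'pos.le]
      exact (hbl' a ha b hb).1)
  have hφcont : ContinuousOn φ V := hφlip.continuousOn
  -- the open target region
  set Ω : Set (Euc n) := (φ '' (V ∩ ball z (2*r))) ∩ ball (φ z) (2*K'*r + 1) with hΩdef
  have himg : φ '' (V ∩ ball z (2*r)) = (φ '' V) ∩ ψ ⁻¹' (V ∩ ball z (2*r)) := by
    ext e
    constructor
    · rintro ⟨a, ⟨haV, haB⟩, rfl⟩
      refine ⟨mem_image_of_mem φ haV, ?_⟩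
      rw [mem_preimage, hψφ a haV]
      exact ⟨haV, haB⟩
    · rintro ⟨he, hpre⟩
      rw [mem_preimage] at hpre
      exact ⟨ψ e, hpre, (hψspec e he).2⟩
  have hΩo : IsOpen Ω := by
    rw [hΩdef, himg]
    exact ((hψcont.isOpen_inter_preimage hφo (hVo.inter isOpen_ball))).inter isOpen_ball
  have hΩsub : Ω ⊆ φ '' (V ∩ ball z (2*r)) := inter_subset_left
  have hΩc : IsClosed Ωᶜ := hΩo.isClosed_compl
  have hΩcne : Ωᶜ.Nonempty := by
    refine ⟨φ z + EuclideanSpace.single (0 : Fin (n+1)) (2*K'*r + 2), fun hmem => ?_⟩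
    have := hmem.2
    rw [mem_ball, dist_eq_norm, add_sub_cancel_left, EuclideanSpace.norm_single,
      Real.norm_eq_abs, abs_of_pos (by positivity)] at this
    linarith
  -- the closed source set and the map in chart coordinates
  set C : Set X := f ⁻¹' (closedBall z r) with hCdef
  have hCc : IsClosed C := (isClosed_closedBall).preimage hf
  haveI : NormalSpace C := (hCc.isClosedEmbedding_subtypeVal).normalSpace
  have hdimC : CovDimLE C n := covDimLE_subtype_of_isClosed hdim hCc
  have hfV : ∀ x : C, f ↑x ∈ V := fun x => hball x.2
  have hfB : ∀ x : C, f ↑x ∈ V ∩ ball z (2*r) := by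
    intro x
    refine ⟨hfV x, ?_⟩
    have : dist (f ↑x) z ≤ r := by exact x.2
    rw [mem_ball]
    linarith
  set F : C → Euc n := fun x => φ (f ↑x) - φ z with hFdef
  have hFc : Continuous F :=
    ((hφcont.comp_continuous (hf.comp continuous_subtype_val) hfV).sub continuous_const)
  have hFnorm : ∀ x : C, ‖F x‖ ≤ K' * r := by
    intro x
    rw [hFdef]
    simp only []
    rw [← dist_eq_norm]
    calc dist (φ (f ↑x)) (φ z) ≤ K' * dist (f ↑x) z := (hbl' _ (hfV x) z hzV).1
      _ ≤ K' * r := mul_le_mul_of_nonneg_left x.2 hK'pos.le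
  have hFΩ : ∀ x : C, F x + φ z ∈ Ω := by
    intro x
    rw [hFdef]
    simp only [sub_add_cancel]
    constructor
    · exact mem_image_of_mem φ (hfB x)
    · rw [mem_ball]
      calc dist (φ (f ↑x)) (φ z) ≤ K' * dist (f ↑x) z := (hbl' _ (hfV x) z hzV).1
        _ ≤ K' * r := mul_le_mul_of_nonneg_left x.2 hK'pos.le
        _ < 2*K'*r + 1 := by nlinarith
  -- the accuracy function
  set δ : C → ℝ := fun x => min (min (ε ↑x / (2*K')) (r / (6*K')))
    (infDist (F x + φ z) Ωᶜ / 2) with hδdef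
  have hδc : Continuous δ := by
    apply Continuous.min
    · apply Continuous.min
      · exact (hε.comp continuous_subtype_val).div_const _
      · exact continuous_const
    · exact ((continuous_infDist_pt Ωᶜ).comp (hFc.add continuous_const)).div_const _
  have hδpos : ∀ x : C, 0 < δ x := by
    intro x
    have h3 : 0 < infDist (F x + φ z) Ωᶜ :=
      (hΩc.notMem_iff_infDist_pos hΩcne).1 (fun hc => hc (hFΩ x))
    have h1 : 0 < ε ↑x / (2*K') := by
      have := hεpos (↑x : X); positivity
    have h2 : 0 < r / (6*K') := by positivity
    simp only [hδdef, lt_min_iff]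
    exact ⟨⟨h1, h2⟩, by linarith⟩
  obtain ⟨G₀, hG₀c, hG₀⟩ := var_avoid hdimC F hFc (K'*r) hFnorm δ hδc hδpos
  -- interpolate to keep F near the shell
  set s₀ : ℝ := r / (2*K') with hs₀def
  have hs₀pos : 0 < s₀ := by positivity
  set χ : C → ℝ := fun x => cut (2 - 2*‖F x‖/s₀) with hχdef
  set G : C → Euc n := fun x => F x + χ x • (G₀ x - F x) with hGdef
  have hχc : Continuous χ := cut_continuous.comp (by fun_prop)
  have hGc : Continuous G := hFc.add (hχc.smul (hG₀c.sub hFc))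
  have hGδ : ∀ x, ‖G x - F x‖ ≤ δ x := by
    intro x
    rw [hGdef]
    simp only [add_sub_cancel_left]
    rw [norm_smul, Real.norm_eq_abs, abs_of_nonneg (cut_mem01 _).1]
    calc cut (2 - 2*‖F x‖/s₀) * ‖G₀ x - F x‖ ≤ 1 * ‖G₀ x - F x‖ :=
          mul_le_mul_of_nonneg_right (cut_mem01 _).2 (norm_nonneg _)
      _ = ‖G₀ x - F x‖ := one_mul _
      _ ≤ δ x := (hG₀ x).1
  have hδs₀ : ∀ x, δ x ≤ s₀ / 3 := by
    intro x
    have : δ x ≤ r / (6*K') := le_trans (min_le_left _ _) (min_le_right _ _)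
    rw [hs₀def]
    calc δ x ≤ r / (6*K') := this
      _ = (r / (2*K')) / 3 := by rw [div_div]; ring_nf
  have hGne : ∀ x, G x ≠ 0 := by
    intro x
    rcases le_or_gt ‖F x‖ (s₀/2) with hle | hlt
    · have hχ1 : χ x = 1 := by
        rw [hχdef]
        apply cut_of_one_le
        rw [le_sub_iff_add_le]
        have h2 : 2*‖F x‖/s₀ ≤ 1 := by
          rw [div_le_one hs₀pos]; linarith
        linarith
      rw [hGdef]
      simp only [hχ1, one_smul]
      rw [add_sub_cancel]
      exact (hG₀ x).2
    · intro hc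
      have h1 : ‖G x - F x‖ ≤ s₀ / 3 := le_trans (hGδ x) (hδs₀ x)
      rw [hc, zero_sub, norm_neg] at h1
      linarith
  have hGshell : ∀ x, s₀ ≤ ‖F x‖ → G x = F x := by
    intro x hx
    have hχ0 : χ x = 0 := by
      rw [hχdef]
      apply cut_of_nonpos
      rw [sub_nonpos]
      rw [le_div_iff₀ hs₀pos]
      linarith
    rw [hGdef]
    simp only [hχ0, zero_smul, add_zero]
  have hGΩ : ∀ x, G x + φ z ∈ Ω := by
    intro x
    by_contra hc
    have h1 : infDist (F x + φ z) Ωᶜ ≤ dist (F x + φ z) (G x + φ z) :=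
      infDist_le_dist_of_mem hc
    have h2 : dist (F x + φ z) (G x + φ z) = ‖G x - F x‖ := by
      rw [dist_eq_norm]
      rw [show F x + φ z - (G x + φ z) = -(G x - F x) by abel, norm_neg]
    have h3 : ‖G x - F x‖ ≤ infDist (F x + φ z) Ωᶜ / 2 :=
      le_trans (hGδ x) (min_le_right _ _)
    have h4 : 0 < infDist (F x + φ z) Ωᶜ :=
      (hΩc.notMem_iff_infDist_pos hΩcne).1 (fun hcc => hcc (hFΩ x))
    rw [h2] at h1
    linarith
  -- the resulting map
  set g : X → Y := fun x => if h : f x ∈ closedBall z r then ψ (G ⟨x, h⟩ + φ z) else f x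
    with hgdef
  -- what g looks like on C
  have hgC : ∀ (x : X) (h : f x ∈ closedBall z r), g x = ψ (G ⟨x, h⟩ + φ z) :=
    fun x h => dif_pos h
  have hgmem : ∀ (x : X) (h : f x ∈ closedBall z r),
      g x ∈ V ∩ ball z (2*r) ∧ φ (g x) = G ⟨x, h⟩ + φ z := by
    intro x h
    have he : G ⟨x, h⟩ + φ z ∈ φ '' (V ∩ ball z (2*r)) := hΩsub (hGΩ ⟨x, h⟩)
    obtain ⟨a, haVB, hae⟩ := he
    have h1 := hψspec (G ⟨x, h⟩ + φ z) ⟨a, haVB.1, hae⟩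
    have h2 : ψ (G ⟨x, h⟩ + φ z) = a := hφi h1.1 haVB.1 (by rw [h1.2, hae])
    rw [hgC x h, h2]
    exact ⟨haVB, by rw [← h2, h1.2]⟩
  have hgdist : ∀ x, dist (g x) (f x) ≤ min (ε x / 2) (r / 6) := by
    intro x
    by_cases h : f x ∈ closedBall z r
    · have h1 := hgmem x h
      have h2 : dist (g x) (f x) ≤ K' * dist (φ (g x)) (φ (f x)) :=
        (hbl' (g x) h1.1.1 (f x) (hball h)).2
      have h3 : dist (φ (g x)) (φ (f x)) = ‖G ⟨x, h⟩ - F ⟨x, h⟩‖ := by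
        rw [h1.2, dist_eq_norm, hFdef]
        congr 1
        simp only []
        abel
      have h4 : ‖G ⟨x, h⟩ - F ⟨x, h⟩‖ ≤ min (ε x / (2*K')) (r / (6*K')) :=
        le_trans (hGδ _) (min_le_left _ _)
      have h5 : K' * min (ε x / (2*K')) (r / (6*K')) = min (ε x / 2) (r / 6) := by
        rw [mul_min_of_nonneg _ _ hK'pos.le]
        congr 1 <;> field_simp <;> ring
      calc dist (g x) (f x) ≤ K' * ‖G ⟨x, h⟩ - F ⟨x, h⟩‖ := by rw [← h3]; exact h2
        _ ≤ K' * min (ε x / (2*K')) (r / (6*K')) :=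
            mul_le_mul_of_nonneg_left h4 hK'pos.le
        _ = min (ε x / 2) (r / 6) := h5
    · rw [hgdef]
      simp only [dif_neg h, dist_self, le_min_iff]
      constructor
      · linarith [hεpos x]
      · linarith
  have hgball : ∀ x, f x ∈ closedBall z r → g x ∈ ball z (2*r) ∧ g x ≠ z := by
    intro x h
    refine ⟨(hgmem x h).1.2, fun hc => ?_⟩
    have h1 := (hgmem x h).2
    rw [hc] at h1
    have : G ⟨x, h⟩ = 0 := by
      have := congrArg (fun e => e - φ z) h1
      simpa using this.symm
    exact hGne _ this
  have hgmod : ∀ x, g x ≠ f x → dist (f x) z < r / 2 := by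
    intro x hgx
    by_cases h : f x ∈ closedBall z r
    · by_contra hc
      push_neg at hc
      have hF : s₀ ≤ ‖F ⟨x, h⟩‖ := by
        have h1 : dist (f x) z ≤ K' * dist (φ (f x)) (φ z) :=
          (hbl' (f x) (hball h) z hzV).2
        have h2 : dist (φ (f x)) (φ z) = ‖F ⟨x, h⟩‖ := by
          rw [dist_eq_norm, hFdef]
        rw [h2] at h1
        rw [hs₀def, div_le_iff₀ (by positivity : (0:ℝ) < 2*K')]
        nlinarith [h1, hc]
      have heq : G ⟨x, h⟩ = F ⟨x, h⟩ := hGshell _ hF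
      have : g x = f x := by
        rw [hgC x h, heq, hFdef]
        simp only [sub_add_cancel]
        exact hψφ (f x) (hball h)
      exact hgx this
    · exact absurd (by rw [hgdef]; simp only [dif_neg h]) hgx
  -- continuity
  have hgcont : Continuous g := by
    rw [continuous_iff_continuousAt]
    intro x₀
    by_cases hx₀ : f x₀ ∈ ball z r
    · -- the chart formula holds near x₀
      set O₁ : Set X := f ⁻¹' (ball z r) with hO₁def
      have hO₁o : IsOpen O₁ := isOpen_ball.preimage hf
      have hO₁C : O₁ ⊆ C := fun x hx => ball_subset_closedBall hx
      set Gt : X → Euc n := fun x => if h : f x ∈ closedBall z r then G ⟨x, h⟩ else 0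
        with hGtdef
      have hGtC : ContinuousOn Gt O₁ := by
        rw [continuousOn_iff_continuous_restrict]
        have : O₁.restrict Gt = G ∘ (fun x : O₁ => (⟨↑x, hO₁C x.2⟩ : C)) := by
          funext x
          simp only [restrict_apply, Function.comp_apply, hGtdef]
          exact dif_pos (hO₁C x.2)
        change Continuous (O₁.restrict Gt)
        rw [this]
        exact hGc.comp (Continuous.subtype_mk continuous_subtype_val _)
      have hw : ContinuousOn (fun x => Gt x + φ z) O₁ := hGtC.add continuousOn_const
      have hwΩ : ∀ x ∈ O₁, Gt x + φ z ∈ φ '' V := by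
        intro x hx
        have h := hO₁C hx
        have : Gt x = G ⟨x, h⟩ := by rw [hGtdef]; exact dif_pos h
        rw [this]
        exact (image_mono inter_subset_left) (hΩsub (hGΩ ⟨x, h⟩))
      have hcomp : ContinuousOn (fun x => ψ (Gt x + φ z)) O₁ :=
        ContinuousOn.comp hψcont hw hwΩ
      have hfeq : ∀ x ∈ O₁, g x = ψ (Gt x + φ z) := by
        intro x hx
        have h := hO₁C hx
        rw [hgC x h, hGtdef]
        simp only [dif_pos (show f x ∈ closedBall z r from h)]
      have : ContinuousAt (fun x => ψ (Gt x + φ z)) x₀ :=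
        hcomp.continuousAt (hO₁o.mem_nhds hx₀)
      apply this.congr
      exact Filter.eventuallyEq_of_mem (hO₁o.mem_nhds hx₀) (fun x hx => (hfeq x hx)) |>.symm
    · -- g = f near x₀
      have hx₀' : r / 2 < dist (f x₀) z := by
        rw [mem_ball, not_lt] at hx₀
        linarith
      set O₂ : Set X := f ⁻¹' {y | r/2 < dist y z} with hO₂def
      have hO₂o : IsOpen O₂ := (isOpen_lt continuous_const (continuous_id.dist continuous_const)).preimage hf
      have hgf : ∀ x ∈ O₂, g x = f x := by
        intro x hx
        by_contra hc
        have := hgmod x hc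
        have hx' : r/2 < dist (f x) z := hx
        linarith
      have : ContinuousAt f x₀ := hf.continuousAt
      apply this.congr
      exact Filter.eventuallyEq_of_mem (hO₂o.mem_nhds hx₀') (fun x hx => hgf x hx) |>.symm
  exact ⟨g, hgcont, hgdist, hgball, hgmod⟩

/-- Over a normal space of covering dimension at most `n`, a continuous map into a
metric `(n+1)`-manifold with a bi-Lipschitz atlas can be perturbed
pointwise-arbitrarily-little so as to avoid a discrete subset `Z`, keeping the map
unchanged outside the preimage of any prescribed neighborhood `W` of `Z`. -/





theorem avoid_discrete_in_manifold_of_covDimLE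
    (n : ℕ) (X : Type*) [TopologicalSpace X] [NormalSpace X] (hdim : CovDimLE X n)
    (Y : Type*) [MetricSpace Y] (hY : HasBiLipschitzAtlas n Y)
    (Z : Set Y) (hZ : DiscreteTopology Z)
    (f : X → Y) (hf : Continuous f)
    (ε : X → ℝ) (hε : Continuous ε) (hεpos : ∀ x, 0 < ε x)
    (W : Set Y) (hW : W ∈ nhdsSet Z) :
    ∃ g : X → Y, Continuous g ∧
      (∀ x, dist (g x) (f x) < ε x ∧ g x ∉ Z) ∧
      ∀ x, f x ∉ W → g x = f x := by
  classical
  -- chart data at each point of Z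
  choose V φ hzV hVo hφo hφi K hK hbl using fun z : Z => hY (z : Y)
  -- isolation radii
  have hiso : ∀ z : Z, ∃ ρ : ℝ, 0 < ρ ∧ ∀ w : Y, w ∈ Z → w ∈ ball (z:Y) ρ → w = (z:Y) := by
    intro z
    have hopen : IsOpen ({z} : Set Z) := isOpen_discrete _
    obtain ⟨t, hto, htz⟩ := isOpen_induced_iff.1 hopen
    have hzt : (z : Y) ∈ t := by
      have h1 : z ∈ Subtype.val ⁻¹' t := by rw [htz]; exact rfl
      exact h1
    obtain ⟨ρ, hρ, hsub⟩ := Metric.isOpen_iff.1 hto _ hzt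
    refine ⟨ρ, hρ, fun w hw hwb => ?_⟩
    have h2 : (⟨w, hw⟩ : Z) ∈ Subtype.val ⁻¹' t := hsub hwb
    rw [htz] at h2
    exact congrArg Subtype.val h2
  choose ρ hρpos hiso' using hiso
  -- neighborhood radii inside V ∩ W
  have hr0 : ∀ z : Z, ∃ r₀ : ℝ, 0 < r₀ ∧ closedBall (z:Y) r₀ ⊆ V z ∩ W := by
    intro z
    have hmem : V z ∩ W ∈ nhds (z : Y) :=
      Filter.inter_mem ((hVo z).mem_nhds (hzV z)) (mem_nhdsSet_iff_forall.1 hW _ z.2)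
    obtain ⟨r₁, hr₁, hsub⟩ := Metric.mem_nhds_iff.1 hmem
    exact ⟨r₁/2, by positivity, fun y hy =>
      hsub (lt_of_le_of_lt (mem_closedBall.1 hy) (by linarith))⟩
  choose r₀ hr₀pos hr₀sub using hr0
  set rr : Z → ℝ := fun z => min (r₀ z) (ρ z / 4) with hrrdef
  have hrrpos : ∀ z, 0 < rr z := fun z => lt_min (hr₀pos z) (by have := hρpos z; positivity)
  have hrrV : ∀ z : Z, closedBall (z:Y) (rr z) ⊆ V z :=
    fun z => subset_trans (closedBall_subset_closedBall (min_le_left _ _))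
      (subset_trans (hr₀sub z) inter_subset_left)
  have hrrW : ∀ z : Z, closedBall (z:Y) (rr z) ⊆ W :=
    fun z => subset_trans (closedBall_subset_closedBall (min_le_left _ _))
      (subset_trans (hr₀sub z) inter_subset_right)
  have hrrρ : ∀ z : Z, 4 * rr z ≤ ρ z := by
    intro z
    have : rr z ≤ ρ z / 4 := min_le_right _ _
    linarith
  -- distances between distinct points of Z
  have hdist : ∀ z z' : Z, z ≠ z' → ρ z ≤ dist (z:Y) (z':Y) := by
    intro z z' hne
    by_contra hc
    push_neg at hc
    have : (z' : Y) = (z : Y) := hiso' z _ z'.2 (mem_ball.2 (by rw [dist_comm]; exact hc))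
    exact hne (Subtype.ext this).symm
  -- disjointness of the modification balls
  have hdisj : ∀ (y : Y) (z z' : Z), y ∈ ball (z:Y) (rr z) → y ∈ ball (z':Y) (rr z') →
      z = z' := by
    intro y z z' hy hy'
    by_contra hne
    have h1 : ρ z ≤ dist (z:Y) (z':Y) := hdist z z' hne
    have h2 : dist (z:Y) (z':Y) ≤ dist (z:Y) y + dist y (z':Y) := dist_triangle _ _ _
    rw [mem_ball] at hy hy'
    rw [dist_comm] at hy
    have h3 := hrrρ z
    have h4 := hrrρ z'
    have h5 : ρ z' ≤ dist (z:Y) (z':Y) := by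
      rw [dist_comm]; exact hdist z' z (Ne.symm hne)
    linarith [hρpos z]
  -- per-chart modifications
  have hpc : ∀ z : Z, ∃ g : X → Y, Continuous g ∧
      (∀ x, dist (g x) (f x) ≤ min (ε x / 2) (rr z / 6)) ∧
      (∀ x, f x ∈ closedBall (z:Y) (rr z) → g x ∈ ball (z:Y) (2*(rr z)) ∧ g x ≠ (z:Y)) ∧
      (∀ x, g x ≠ f x → dist (f x) (z:Y) < rr z / 2) :=
    fun z => perchart hdim f hf ε hε hεpos (z:Y) (V z) (φ z) (hzV z) (hVo z) (hφo z) (hφi z)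
      (K z) (hK z) (hbl z) (rr z) (hrrpos z) (hrrV z)
  choose gz hgzc hgzd hgzb hgzm using hpc
  -- glue
  set g : X → Y := fun x => if h : ∃ z : Z, f x ∈ ball (z:Y) (rr z) then gz h.choose x else f x
    with hgdef
  have hgeq : ∀ (x : X) (z : Z), f x ∈ ball (z:Y) (rr z) → g x = gz z x := by
    intro x z hx
    have hex : ∃ z : Z, f x ∈ ball (z:Y) (rr z) := ⟨z, hx⟩
    rw [hgdef]
    simp only [dif_pos hex]
    have : hex.choose = z := hdisj (f x) _ z hex.choose_spec hx
    rw [this]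
  have hgno : ∀ x : X, (¬ ∃ z : Z, f x ∈ ball (z:Y) (rr z)) → g x = f x := by
    intro x hx
    rw [hgdef]
    simp only [dif_neg hx]
  refine ⟨g, ?_, fun x => ⟨?_, ?_⟩, fun x hx => ?_⟩
  · -- continuity
    rw [continuous_iff_continuousAt]
    intro x₀
    by_cases hx₀ : ∃ z : Z, f x₀ ∈ ball (z:Y) (rr z)
    · obtain ⟨z, hz⟩ := hx₀
      have hOo : IsOpen (f ⁻¹' (ball (z:Y) (rr z))) := isOpen_ball.preimage hf
      apply ((hgzc z).continuousAt).congr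
      exact (Filter.eventuallyEq_of_mem (hOo.mem_nhds hz)
        (fun x hx => hgeq x z hx)).symm
    · have hgx₀ : g x₀ = f x₀ := hgno x₀ hx₀
      have hbound : ∀ x, dist (g x) (f x₀) ≤ 2 * dist (f x) (f x₀) := by
        intro x
        rcases eq_or_ne (g x) (f x) with heq | hne
        · rw [heq]
          have := dist_nonneg (x := f x) (y := f x₀)
          linarith
        · have hex : ∃ z : Z, f x ∈ ball (z:Y) (rr z) := by
            by_contra hc
            exact hne (hgno x hc)
          obtain ⟨z, hz⟩ := hex
          have hgx : g x = gz z x := hgeq x z hz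
          have hmod : dist (f x) (z:Y) < rr z / 2 := by
            apply hgzm z x
            rw [← hgx]
            exact hne
          have hfar : rr z ≤ dist (f x₀) (z:Y) := by
            by_contra hc
            push_neg at hc
            exact hx₀ ⟨z, mem_ball.2 hc⟩
          have htri : dist (f x₀) (z:Y) ≤ dist (f x₀) (f x) + dist (f x) (z:Y) :=
            dist_triangle _ _ _
          have hrlt : rr z < 2 * dist (f x) (f x₀) := by
            rw [dist_comm (f x) (f x₀)]
            linarith
          have hd1 : dist (g x) (f x) ≤ rr z / 6 := by
            rw [hgx]
            exact le_trans (hgzd z x) (min_le_right _ _)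
          calc dist (g x) (f x₀) ≤ dist (g x) (f x) + dist (f x) (f x₀) := dist_triangle _ _ _
            _ ≤ rr z / 6 + dist (f x) (f x₀) := by linarith
            _ ≤ 2 * dist (f x) (f x₀) := by linarith [dist_nonneg (x := f x) (y := f x₀)]
      have htend : Filter.Tendsto (fun x => dist (g x) (f x₀)) (nhds x₀) (nhds 0) := by
        apply squeeze_zero (fun x => dist_nonneg) hbound
        have h1 : Filter.Tendsto (fun x => 2 * dist (f x) (f x₀)) (nhds x₀)
            (nhds (2 * dist (f x₀) (f x₀))) :=
          ((hf.tendsto x₀).dist tendsto_const_nhds).const_mul 2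
        simpa using h1
      rw [ContinuousAt, hgx₀]
      exact tendsto_iff_dist_tendsto_zero.2 htend
  · -- distance
    by_cases hx : ∃ z : Z, f x ∈ ball (z:Y) (rr z)
    · obtain ⟨z, hz⟩ := hx
      rw [hgeq x z hz]
      calc dist (gz z x) (f x) ≤ min (ε x / 2) (rr z / 6) := hgzd z x
        _ ≤ ε x / 2 := min_le_left _ _
        _ < ε x := by linarith [hεpos x]
    · rw [hgno x hx, dist_self]
      exact hεpos x
  · -- avoid Z
    by_cases hx : ∃ z : Z, f x ∈ ball (z:Y) (rr z)
    · obtain ⟨z, hz⟩ := hx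
      rw [hgeq x z hz]
      intro hc
      obtain ⟨hmem, hne⟩ := hgzb z x (ball_subset_closedBall hz)
      have hlt : gz z x ∈ ball (z:Y) (ρ z) := by
        rw [mem_ball] at hmem ⊢
        have := hrrρ z
        linarith [hrrpos z]
      exact hne (hiso' z _ hc hlt)
    · rw [hgno x hx]
      intro hc
      have : f x ∈ ball ((⟨f x, hc⟩ : Z) : Y) (rr ⟨f x, hc⟩) :=
        mem_ball_self (hrrpos _)
      exact hx ⟨⟨f x, hc⟩, this⟩
  · -- agree off W
    by_cases hex : ∃ z : Z, f x ∈ ball (z:Y) (rr z)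
    · obtain ⟨z, hz⟩ := hex
      exact absurd (hrrW z (ball_subset_closedBall hz)) hx
    · exact hgno x hex
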